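/- arXiv:2205.04785 — 3 statements merged into one kernel-verified Lean document; each statement's English description precedes it below -/
import Mathlib

section
/- A prefix transposition on a permutation can create at most two new adjacencies, where an adjacency of a permutation π of {0,1,...,n-1} is a position i with π(i+1) = π(i) + 1 (mod n). -/
def adjacencies (n : ℕ) (l : List ℕ) : ℕ :=
  (List.range (l.length - 1)).countP (fun i => l.getD (i+1) 0 == (l.getD i 0 + 1) % n)

def breakpoints (n : ℕ) (l : List ℕ) : ℕ :=
  (List.range (l.length - 1)).countP (fun i => !(l.getD (i+1) 0 == (l.getD i 0 + 1) % n))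

/-- Prefix transposition α(i,j): move the prefix (π₁,...,π_{i-1}) to between
π_{j-1} and π_j, yielding (π_i,...,π_{j-1},π₁,...,π_{i-1},π_j,...). -/
def prefixTrans (i j : ℕ) (l : List ℕ) : List ℕ :=
  ((l.drop (i-1)).take (j-i)) ++ l.take (i-1) ++ l.drop (j-1)

/-- Recursive adjacency counter. -/
def adjC (n : ℕ) : List ℕ → ℕ
  | a :: b :: t => (if b == (a + 1) % n then 1 else 0) + adjC n (b :: t)
  | _ => 0

lemma adjC_nil (n : ℕ) : adjC n [] = 0 := rfl
lemma adjC_single (n a : ℕ) : adjC n [a] = 0 := rfl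
lemma adjC_cons_cons (n a b : ℕ) (t : List ℕ) :
    adjC n (a :: b :: t) = (if b == (a + 1) % n then 1 else 0) + adjC n (b :: t) := rfl

lemma adjC_eq (n : ℕ) : ∀ l : List ℕ, adjacencies n l = adjC n l
  | [] => rfl
  | [_] => rfl
  | a :: b :: t => by
    have ih := adjC_eq n (b :: t)
    unfold adjacencies at ih ⊢
    show (List.range (t.length + 1)).countP _ = _
    rw [List.range_succ_eq_map, List.countP_cons, List.countP_map, adjC_cons_cons, ← ih]
    rw [show ((b :: t).length - 1) = t.length from rfl]
    simp only [Function.comp_def, List.getD_cons_succ, List.getD_cons_zero]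
    omega

lemma adjC_append_le (n : ℕ) : ∀ X Y : List ℕ, adjC n (X ++ Y) ≤ adjC n X + adjC n Y + 1
  | [], Y => by simp only [List.nil_append, adjC_nil]; omega
  | [a], Y => by
    cases Y with
    | nil => simp [adjC_single, adjC_nil]
    | cons b t =>
      show adjC n (a :: b :: t) ≤ adjC n [a] + adjC n (b :: t) + 1
      rw [adjC_cons_cons, adjC_single]
      split <;> omega
  | a :: b :: t, Y => by
    have ih := adjC_append_le n (b :: t) Y
    show adjC n (a :: b :: (t ++ Y)) ≤ adjC n (a :: b :: t) + adjC n Y + 1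
    rw [adjC_cons_cons, adjC_cons_cons]
    have : (b :: (t ++ Y)) = (b :: t) ++ Y := rfl
    rw [this]
    omega

lemma adjC_append_ge (n : ℕ) : ∀ X Y : List ℕ, adjC n X + adjC n Y ≤ adjC n (X ++ Y)
  | [], Y => by simp only [List.nil_append, adjC_nil]; omega
  | [a], Y => by
    cases Y with
    | nil => simp [adjC_single, adjC_nil]
    | cons b t =>
      show adjC n [a] + adjC n (b :: t) ≤ adjC n (a :: b :: t)
      rw [adjC_cons_cons, adjC_single]
      omega
  | a :: b :: t, Y => by
    have ih := adjC_append_ge n (b :: t) Y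
    show adjC n (a :: b :: t) + adjC n Y ≤ adjC n (a :: b :: (t ++ Y))
    rw [adjC_cons_cons, adjC_cons_cons]
    have : (b :: (t ++ Y)) = (b :: t) ++ Y := rfl
    rw [this]
    omega

/-- A prefix transposition can create at most two new adjacencies. -/
theorem prefixTrans_adjacencies_le (n : ℕ) (π : List ℕ)
    (hπ : π.Perm (List.range n)) (i j : ℕ) (hi : 1 ≤ i) (hij : i < j)
    (hj : j ≤ n) :
    adjacencies n (prefixTrans i j π) ≤ adjacencies n π + 2 := by
  set A := π.take (i-1) with hA
  set B := (π.drop (i-1)).take (j-i) with hB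
  set C := π.drop (j-1) with hC
  have hBC : B ++ C = π.drop (i-1) := by
    have hC' : C = (π.drop (i-1)).drop (j-i) := by
      rw [List.drop_drop, show i - 1 + (j - i) = j - 1 by omega]
    rw [hC', hB, List.take_append_drop]
  have hπeq : π = A ++ (B ++ C) := by rw [hBC, hA, List.take_append_drop]
  have hpt : prefixTrans i j π = B ++ (A ++ C) := by
    simp [prefixTrans, List.append_assoc]
    rfl
  rw [hpt, adjC_eq]
  conv_rhs => rw [hπeq, adjC_eq]
  have h1 := adjC_append_le n B (A ++ C)
  have h2 := adjC_append_le n A C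
  have h3 := adjC_append_ge n A (B ++ C)
  have h4 := adjC_append_ge n B C
  omega
end

section
/- If a prefix transposition creating two adjacencies (a 'double') exists on a reduced permutation, it is unique. -/
private lemma mod_succ_inj {n a b : ℕ} (ha : a < n) (hb : b < n)
    (h : (a+1) % n = (b+1) % n) : a = b := by
  rcases Nat.lt_or_ge (a+1) n with h1 | h1
  · rw [Nat.mod_eq_of_lt h1] at h
    rcases Nat.lt_or_ge (b+1) n with h2 | h2
    · rw [Nat.mod_eq_of_lt h2] at h; omega
    · have hb1 : b + 1 = n := by omega
      rw [hb1, Nat.mod_self] at h; omega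
  · have ha1 : a + 1 = n := by omega
    rw [ha1, Nat.mod_self] at h
    rcases Nat.lt_or_ge (b+1) n with h2 | h2
    · rw [Nat.mod_eq_of_lt h2] at h; omega
    · omega

private lemma double_cond (n : ℕ) (π : List ℕ) (hlen : π.length = n)
    (hred : adjacencies n π = 0) (i j : ℕ)
    (hi : 1 ≤ i) (hij : i < j) (hj : j ≤ n)
    (hd : 2 ≤ adjacencies n (prefixTrans i j π)) :
    2 ≤ i ∧ π.getD 0 0 = (π.getD (j-2) 0 + 1) % n ∧
      π.getD (j-1) 0 = (π.getD (i-2) 0 + 1) % n := by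
  -- rule out i = 1
  have hi2 : 2 ≤ i := by
    by_contra h
    have hi1 : i = 1 := by omega
    have : prefixTrans i j π = π := by
      simp [prefixTrans, hi1]
    rw [this, hred] at hd
    omega
  -- lengths
  have hBlen : ((π.drop (i-1)).take (j-i)).length = j - i := by
    simp [hlen]; omega
  have hAlen : (π.take (i-1)).length = i - 1 := by
    simp [hlen]; omega
  have hLlen : (prefixTrans i j π).length = n := by
    simp only [prefixTrans, List.length_append, hBlen, hAlen, List.length_drop, hlen]
    omega
  -- getD computations
  have hB : ∀ p, p < j - i → (prefixTrans i j π).getD p 0 = π.getD (i-1+p) 0 := by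
    intro p hp
    simp only [prefixTrans, List.getD_eq_getElem?_getD, List.getElem?_append,
      List.length_append, hBlen, hAlen, List.getElem?_take, List.getElem?_drop]
    rw [if_pos (by omega), if_pos hp, if_pos hp]
  have hA : ∀ p, j - i ≤ p → p < j - 1 → (prefixTrans i j π).getD p 0 = π.getD (p-(j-i)) 0 := by
    intro p hp1 hp2
    simp only [prefixTrans, List.getD_eq_getElem?_getD, List.getElem?_append,
      List.length_append, hBlen, hAlen, List.getElem?_take, List.getElem?_drop]
    rw [if_pos (by omega), if_neg (by omega), if_pos (by omega)]
  have hC : ∀ p, j - 1 ≤ p → (prefixTrans i j π).getD p 0 = π.getD p 0 := by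
    intro p hp
    simp only [prefixTrans, List.getD_eq_getElem?_getD, List.getElem?_append,
      List.length_append, hBlen, hAlen, List.getElem?_drop]
    rw [if_neg (by omega)]
    have he : j - 1 + (p - (j - i + (i - 1))) = p := by omega
    rw [he]
  -- no old adjacencies
  have hnred : ∀ k, k < n - 1 → ¬ (π.getD (k+1) 0 = (π.getD k 0 + 1) % n) := by
    intro k hk
    rw [adjacencies] at hred
    have := List.countP_eq_zero.mp hred k (by rw [List.mem_range, hlen]; omega)
    simpa using this
  -- characterization of positions with new adjacencies
  have hchar : ∀ p, p < n - 1 →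
      ((prefixTrans i j π).getD (p+1) 0 == ((prefixTrans i j π).getD p 0 + 1) % n) = true →
      (p = j - i - 1 ∧ π.getD 0 0 = (π.getD (j-2) 0 + 1) % n) ∨
      (p = j - 2 ∧ π.getD (j-1) 0 = (π.getD (i-2) 0 + 1) % n) := by
    intro p hp hpred
    rw [beq_iff_eq] at hpred
    by_cases h1 : p + 1 < j - i
    · -- inside B: old adjacency, contradiction
      rw [hB (p+1) h1, hB p (by omega)] at hpred
      have : i - 1 + (p + 1) = (i - 1 + p) + 1 := by omega
      rw [this] at hpred
      exact absurd hpred (hnred (i-1+p) (by omega))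
    · by_cases h2 : p = j - i - 1
      · -- junction 1
        left
        refine ⟨h2, ?_⟩
        have hp1 : p + 1 = j - i := by omega
        rw [hB p (by omega), hp1, hA (j-i) le_rfl (by omega)] at hpred
        simp only [Nat.sub_self] at hpred
        have : i - 1 + p = j - 2 := by omega
        rw [this] at hpred
        exact hpred
      · by_cases h3 : p + 1 < j - 1
        · -- inside A
          rw [hA (p+1) (by omega) h3, hA p (by omega) (by omega)] at hpred
          have : p + 1 - (j - i) = (p - (j - i)) + 1 := by omega
          rw [this] at hpred
          exact absurd hpred (hnred (p-(j-i)) (by omega))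
        · by_cases h4 : p = j - 2
          · -- junction 2
            right
            refine ⟨h4, ?_⟩
            have hp1 : p + 1 = j - 1 := by omega
            rw [hp1, hC (j-1) le_rfl, hA p (by omega) (by omega)] at hpred
            have : p - (j - i) = i - 2 := by omega
            rw [this] at hpred
            exact hpred
          · -- inside C
            rw [hC (p+1) (by omega), hC p (by omega)] at hpred
            exact absurd hpred (hnred p hp)
  have hadj : adjacencies n (prefixTrans i j π) =
      (List.range (n-1)).countP
        (fun p => (prefixTrans i j π).getD (p+1) 0 == ((prefixTrans i j π).getD p 0 + 1) % n) := by
    rw [adjacencies, hLlen]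
  refine ⟨hi2, ?_, ?_⟩
  · by_contra hc
    have hle : adjacencies n (prefixTrans i j π) ≤ 1 := by
      rw [hadj]
      calc (List.range (n-1)).countP
            (fun p => (prefixTrans i j π).getD (p+1) 0 == ((prefixTrans i j π).getD p 0 + 1) % n)
          ≤ (List.range (n-1)).countP (· == j - 2) := by
            apply List.countP_mono_left
            intro p hp hpred
            rcases hchar p (List.mem_range.mp hp) hpred with ⟨_, c1⟩ | ⟨pe, _⟩
            · exact absurd c1 hc
            · simp [pe]
        _ = (List.range (n-1)).count (j-2) := rfl
        _ ≤ 1 := List.nodup_iff_count_le_one.mp List.nodup_range _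
    omega
  · by_contra hc
    have hle : adjacencies n (prefixTrans i j π) ≤ 1 := by
      rw [hadj]
      calc (List.range (n-1)).countP
            (fun p => (prefixTrans i j π).getD (p+1) 0 == ((prefixTrans i j π).getD p 0 + 1) % n)
          ≤ (List.range (n-1)).countP (· == j - i - 1) := by
            apply List.countP_mono_left
            intro p hp hpred
            rcases hchar p (List.mem_range.mp hp) hpred with ⟨pe, _⟩ | ⟨_, c2⟩
            · simp [pe]
            · exact absurd c2 hc
        _ = (List.range (n-1)).count (j-i-1) := rfl
        _ ≤ 1 := List.nodup_iff_count_le_one.mp List.nodup_range _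
    omega

/-- On a reduced permutation, a double (a prefix transposition creating two
adjacencies), if it exists, is unique. -/
theorem double_unique (n : ℕ) (π : List ℕ) (hπ : π.Perm (List.range n))
    (hred : adjacencies n π = 0)
    (i j i' j' : ℕ)
    (hi : 1 ≤ i) (hij : i < j) (hj : j ≤ n)
    (hi' : 1 ≤ i') (hij' : i' < j') (hj' : j' ≤ n)
    (hd : 2 ≤ adjacencies n (prefixTrans i j π))
    (hd' : 2 ≤ adjacencies n (prefixTrans i' j' π)) :
    i = i' ∧ j = j' := by
  have hlen : π.length = n := by rw [hπ.length_eq, List.length_range]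
  have hnd : π.Nodup := hπ.nodup_iff.mpr List.nodup_range
  obtain ⟨hi2, c1, c2⟩ := double_cond n π hlen hred i j hi hij hj hd
  obtain ⟨hi2', c1', c2'⟩ := double_cond n π hlen hred i' j' hi' hij' hj' hd'
  have hval : ∀ k, k < n → π.getD k 0 < n := by
    intro k hk
    have hk' : k < π.length := by omega
    rw [List.getD_eq_getElem π 0 hk']
    have : π[k] ∈ List.range n := hπ.subset (List.getElem_mem hk')
    exact List.mem_range.mp this
  have hinj : ∀ k k', k < n → k' < n → π.getD k 0 = π.getD k' 0 → k = k' := by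
    intro k k' hk hk' h
    have hk1 : k < π.length := by omega
    have hk1' : k' < π.length := by omega
    rw [List.getD_eq_getElem π 0 hk1, List.getD_eq_getElem π 0 hk1'] at h
    exact (hnd.getElem_inj_iff).mp h
  have hj2 : j - 2 = j' - 2 := by
    apply hinj _ _ (by omega) (by omega)
    apply mod_succ_inj (hval _ (by omega)) (hval _ (by omega))
    rw [← c1, ← c1']
  have hjeq : j = j' := by omega
  have hi2eq : i - 2 = i' - 2 := by
    apply hinj _ _ (by omega) (by omega)
    apply mod_succ_inj (hval _ (by omega)) (hval _ (by omega))
    rw [← c2, ← c2', hjeq]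
  exact ⟨by omega, hjeq⟩
end

section
/- Sorting a permutation π ∈ S_n by prefix transpositions is equivalent in cost to sorting its reduction: if π has an adjacency (a pair of consecutive positions with consecutive values), then the prefix transposition distance of π to the identity equals the prefix transposition distance of the reduced permutation π' ∈ S_{n-1} obtained by merging that adjacent pair into a single symbol. -/
/-- `reachableIn d l m` : `l` can be transformed into `m` by exactly `d`
prefix transpositions (insertion at the very end allowed, i.e. j ≤ n+1). -/
def reachableIn : ℕ → List ℕ → List ℕ → Prop
  | 0, l, m => l = m
  | d+1, l, m => ∃ i j, 1 ≤ i ∧ i < j ∧ j ≤ l.length + 1 ∧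
      reachableIn d (prefixTrans i j l) m


private lemma take_take_of_le {a b : ℕ} (h : a ≤ b) (l : List ℕ) :
    (l.take b).take a = l.take a := by
  rw [List.take_take, Nat.min_eq_left h]

private lemma split3 (a b : ℕ) (h : a ≤ b) (l : List ℕ) :
    l = l.take a ++ (l.take b).drop a ++ l.drop b := by
  conv_lhs => rw [← List.take_append_drop b l, ← List.take_append_drop a (l.take b),
    take_take_of_le h l]

private lemma prefixTrans_eq (a b : ℕ) (l : List ℕ) :
    prefixTrans (a+1) (b+1) l = (l.take b).drop a ++ l.take a ++ l.drop b := by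
  simp [prefixTrans, List.drop_take, Nat.succ_sub_succ]

private lemma prefixTrans_self (a : ℕ) (l : List ℕ) : prefixTrans (a+1) (a+1) l = l := by
  simp [prefixTrans]

private lemma prefixTrans_append (X Y Z : List ℕ) :
    prefixTrans (X.length + 1) ((X ++ Y).length + 1) (X ++ Y ++ Z) = Y ++ X ++ Z := by
  have e1 : ((X ++ Y ++ Z).take ((X ++ Y).length)).drop X.length = Y := by
    rw [List.take_left, List.drop_left]
  have e2 : (X ++ Y ++ Z).take X.length = X := by
    rw [List.append_assoc, List.take_left]
  have e3 : (X ++ Y ++ Z).drop ((X ++ Y).length) = Z := List.drop_left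
  rw [prefixTrans_eq, e1, e2, e3]

private lemma flatMap_take_split (f : ℕ → List ℕ) {a b : ℕ} (h : a ≤ b) (l : List ℕ) :
    (l.take b).flatMap f = (l.take a).flatMap f ++ ((l.take b).drop a).flatMap f := by
  conv_lhs => rw [← List.take_append_drop a (l.take b), take_take_of_le h l]
  rw [List.flatMap_append]

private lemma flatMap_prefixTrans (f : ℕ → List ℕ) {a b : ℕ} (h : a ≤ b) (l : List ℕ) :
    (prefixTrans (a+1) (b+1) l).flatMap f =
      prefixTrans (((l.take a).flatMap f).length + 1) (((l.take b).flatMap f).length + 1)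
        (l.flatMap f) := by
  have hl : l.flatMap f = (l.take a).flatMap f ++ ((l.take b).drop a).flatMap f
      ++ (l.drop b).flatMap f := by
    conv_lhs => rw [split3 a b h l]
    simp [List.flatMap_append]
  rw [flatMap_take_split f h l, hl, prefixTrans_append, prefixTrans_eq,
    List.flatMap_append, List.flatMap_append]

private lemma length_flatMap_take_le (f : ℕ → List ℕ) (b : ℕ) (l : List ℕ) :
    ((l.take b).flatMap f).length ≤ (l.flatMap f).length := by
  conv_rhs => rw [← List.take_append_drop b l]
  simp only [List.flatMap_append, List.length_append]
  omega

private lemma length_flatMap_take_lt (f : ℕ → List ℕ) (hf : ∀ x, f x ≠ [])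
    {a b : ℕ} (hab : a < b) {l : List ℕ} (hb : b ≤ l.length) :
    ((l.take a).flatMap f).length < ((l.take b).flatMap f).length := by
  have hne : (l.take b).drop a ≠ [] := by
    intro hcon
    have := congrArg List.length hcon
    simp [Nat.min_eq_left hb] at this
    omega
  obtain ⟨x, t, hxt⟩ := List.exists_cons_of_ne_nil hne
  rw [flatMap_take_split f (le_of_lt hab) l, hxt]
  have hx : 0 < (f x).length := List.length_pos_iff.mpr (hf x)
  simp only [List.flatMap_cons, List.length_append]
  omega

private lemma reachable_lift (f : ℕ → List ℕ) (hf : ∀ x, f x ≠ []) :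
    ∀ d l m, reachableIn d l m → reachableIn d (l.flatMap f) (m.flatMap f) := by
  intro d
  induction d with
  | zero => intro l m h; simp only [reachableIn] at h ⊢; rw [h]
  | succ d ih =>
    intro l m h
    simp only [reachableIn] at h ⊢
    obtain ⟨i, j, h1, h2, h3, h4⟩ := h
    obtain ⟨a, rfl⟩ : ∃ a, i = a + 1 := ⟨i - 1, by omega⟩
    obtain ⟨b, rfl⟩ : ∃ b, j = b + 1 := ⟨j - 1, by omega⟩
    refine ⟨((l.take a).flatMap f).length + 1, ((l.take b).flatMap f).length + 1,
      by omega, ?_, ?_, ?_⟩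
    · have := length_flatMap_take_lt f hf (show a < b by omega) (show b ≤ l.length by omega)
      omega
    · have := length_flatMap_take_le f b l; omega
    · rw [← flatMap_prefixTrans f (by omega : a ≤ b)]
      exact ih _ _ h4

private lemma reachable_proj (f : ℕ → List ℕ) :
    ∀ d l m, reachableIn d l m → ∃ d' ≤ d, reachableIn d' (l.flatMap f) (m.flatMap f) := by
  intro d
  induction d with
  | zero =>
    intro l m h
    exact ⟨0, le_refl 0, by simp only [reachableIn] at h ⊢; rw [h]⟩
  | succ d ih =>
    intro l m h
    simp only [reachableIn] at h
    obtain ⟨i, j, h1, h2, h3, h4⟩ := h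
    obtain ⟨a, rfl⟩ : ∃ a, i = a + 1 := ⟨i - 1, by omega⟩
    obtain ⟨b, rfl⟩ : ∃ b, j = b + 1 := ⟨j - 1, by omega⟩
    obtain ⟨d', hd', hR⟩ := ih _ _ h4
    rw [flatMap_prefixTrans f (by omega : a ≤ b)] at hR
    by_cases hc : ((l.take a).flatMap f).length = ((l.take b).flatMap f).length
    · rw [hc, prefixTrans_self] at hR
      exact ⟨d', by omega, hR⟩
    · have hle : ((l.take a).flatMap f).length ≤ ((l.take b).flatMap f).length := by
        rw [flatMap_take_split f (by omega : a ≤ b) l]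
        simp
      refine ⟨d' + 1, by omega, ?_⟩
      simp only [reachableIn]
      exact ⟨_, _, by omega, by omega,
        by have := length_flatMap_take_le f b l; omega, hR⟩


private def rmap (v x : ℕ) : ℕ := if v < x then x - 1 else x
private def fP (v x : ℕ) : List ℕ := if x = v + 1 then [] else [rmap v x]
private def fL (v x : ℕ) : List ℕ := if x = v then [v, v+1] else if v < x then [x+1] else [x]

private lemma fL_ne_nil (v x : ℕ) : fL v x ≠ [] := by
  unfold fL; split_ifs <;> simp

private lemma flatMap_congr {l : List ℕ} {f g : ℕ → List ℕ} (h : ∀ x ∈ l, f x = g x) :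
    l.flatMap f = l.flatMap g := by
  induction l with
  | nil => rfl
  | cons x t ih =>
    simp only [List.flatMap_cons]
    rw [h x (by simp), ih (fun y hy => h y (by simp [hy]))]

private lemma flatMap_id (l : List ℕ) : l.flatMap (fun x => [x]) = l := by
  induction l <;> simp_all

private lemma flatMap_single (g : ℕ → ℕ) (l : List ℕ) :
    l.flatMap (fun x => [g x]) = l.map g := by
  induction l <;> simp_all

private lemma flatMap_fP (v : ℕ) {l : List ℕ} (h : v + 1 ∉ l) :
    l.flatMap (fP v) = l.map (rmap v) := by
  rw [← flatMap_single]
  exact flatMap_congr (fun x hx => if_neg (by rintro rfl; exact h hx))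

private lemma fL_rmap {v x : ℕ} (hx : x ≠ v) (hx1 : x ≠ v + 1) : fL v (rmap v x) = [x] := by
  by_cases h : v < x
  · have h2 : rmap v x = x - 1 := if_pos h
    have h3 : x - 1 ≠ v := by omega
    have h4 : v < x - 1 := by omega
    rw [h2]
    unfold fL
    rw [if_neg h3, if_pos h4]
    congr 1
    omega
  · have h2 : rmap v x = x := if_neg h
    rw [h2]
    unfold fL
    rw [if_neg hx, if_neg h]

private lemma flatMap_fL_map (v : ℕ) {l : List ℕ} (h1 : v ∉ l) (h2 : v + 1 ∉ l) :
    (l.map (rmap v)).flatMap (fL v) = l := by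
  rw [List.flatMap_map]
  conv_rhs => rw [← flatMap_id l]
  exact flatMap_congr (fun x hx =>
    fL_rmap (by rintro rfl; exact h1 hx) (by rintro rfl; exact h2 hx))

private lemma range_fP_base (v : ℕ) : (List.range (v+1)).flatMap (fP v) = List.range (v+1) := by
  conv_rhs => rw [← flatMap_id (List.range (v+1))]
  refine flatMap_congr fun x hx => ?_
  have hx' : x < v + 1 := List.mem_range.mp hx
  unfold fP rmap
  rw [if_neg (by omega), if_neg (by omega)]

private lemma range_fP (v : ℕ) (k : ℕ) :
    (List.range (v+2+k)).flatMap (fP v) = List.range (v+1+k) := by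
  induction k with
  | zero =>
    show (List.range ((v+1)+1)).flatMap (fP v) = List.range (v+1)
    rw [List.range_succ, List.flatMap_append, range_fP_base]
    simp [fP]
  | succ k ih =>
    show (List.range ((v+2+k)+1)).flatMap (fP v) = List.range ((v+1+k)+1)
    rw [List.range_succ, List.flatMap_append, ih, List.range_succ]
    have : fP v (v+2+k) = [v+1+k] := by
      unfold fP rmap
      rw [if_neg (by omega), if_pos (by omega)]
      congr 1
      omega
    simp [this]

private lemma range_fL_base (v : ℕ) : (List.range v).flatMap (fL v) = List.range v := by
  conv_rhs => rw [← flatMap_id (List.range v)]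
  refine flatMap_congr fun x hx => ?_
  have hx' : x < v := List.mem_range.mp hx
  unfold fL
  rw [if_neg (by omega), if_neg (by omega)]

private lemma range_fL (v : ℕ) (k : ℕ) :
    (List.range (v+1+k)).flatMap (fL v) = List.range (v+2+k) := by
  induction k with
  | zero =>
    show (List.range (v+1)).flatMap (fL v) = List.range ((v+1)+1)
    rw [List.range_succ, List.flatMap_append, range_fL_base, List.range_succ, List.range_succ]
    have : fL v v = [v, v+1] := if_pos rfl
    simp [this]
  | succ k ih =>
    show (List.range ((v+1+k)+1)).flatMap (fL v) = List.range ((v+2+k)+1)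
    rw [List.range_succ, List.flatMap_append, ih, List.range_succ]
    have : fL v (v+1+k) = [v+2+k] := by
      unfold fL
      rw [if_neg (by omega), if_pos (by omega)]
      congr 1
      omega
    simp [this]

/-- Sorting a permutation by prefix transpositions costs exactly the same as
sorting its reduction obtained by merging an adjacency into one symbol. -/

theorem distance_eq_reduced (n : ℕ) (π : List ℕ)
    (hπ : π.Perm (List.range n)) (i : ℕ) (hi : i + 1 < n)
    (hadj : π.getD (i+1) 0 = π.getD i 0 + 1) :
    sInf {d : ℕ | reachableIn d π (List.range n)} =
      sInf {d : ℕ | reachableIn d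
        ((π.eraseIdx (i+1)).map (fun x => if π.getD i 0 < x then x - 1 else x))
        (List.range (n - 1))} := by
  have hlen : π.length = n := by simpa using hπ.length_eq
  set v := π.getD i 0 with hv
  have hr : (fun x : ℕ => if v < x then x - 1 else x) = rmap v := rfl
  rw [hr]
  have hiℓ : i < π.length := by omega
  have hi1ℓ : i + 1 < π.length := by omega
  have hgv : π[i] = v := (List.getD_eq_getElem π 0 hiℓ).symm
  have hgv1 : π[i+1] = v + 1 := by rw [← List.getD_eq_getElem π 0 hi1ℓ, hadj]
  obtain ⟨A, hA⟩ : ∃ A, π.take i = A := ⟨_, rfl⟩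
  obtain ⟨B, hB⟩ : ∃ B, π.drop (i+2) = B := ⟨_, rfl⟩
  have hsplit : π = A ++ v :: (v+1) :: B := by
    conv_lhs => rw [← List.take_append_drop i π]
    rw [hA, List.drop_eq_getElem_cons hiℓ, hgv,
      List.drop_eq_getElem_cons hi1ℓ, hgv1, hB]
  -- nodup facts
  have hnd : (A ++ v :: (v+1) :: B).Nodup := by
    rw [← hsplit]
    exact hπ.nodup_iff.mpr List.nodup_range
  have hdisj : A.Disjoint (v :: (v+1) :: B) := List.disjoint_of_nodup_append hnd
  have hvA : v ∉ A := fun h => hdisj h (by simp)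
  have hv1A : v + 1 ∉ A := fun h => hdisj h (by simp)
  have hnd2 : (v :: (v+1) :: B).Nodup := hnd.of_append_right
  have hvB : v ∉ B := by
    have := hnd2
    simp only [List.nodup_cons, List.mem_cons] at this
    tauto
  have hv1B : v + 1 ∉ B := by
    have := hnd2
    simp only [List.nodup_cons, List.mem_cons] at this
    tauto
  -- value bound
  have hv1n : v + 1 < n := by
    have hmem : v + 1 ∈ π := by rw [← hgv1]; exact List.getElem_mem _
    exact List.mem_range.mp (hπ.subset hmem)
  obtain ⟨k, hk⟩ : ∃ k, n = v + 2 + k := ⟨n - (v+2), by omega⟩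
  -- the reduced permutation
  have h_take : π.take (i+1) = A ++ [v] := by
    rw [List.take_succ, hA, List.getElem?_eq_getElem hiℓ, hgv]
    rfl
  have h_erase : π.eraseIdx (i+1) = A ++ v :: B := by
    rw [List.eraseIdx_eq_take_drop_succ, h_take, hB]
    simp
  have hπ₂ : (π.eraseIdx (i+1)).map (rmap v) = π.flatMap (fP v) := by
    rw [h_erase]
    conv_rhs => rw [hsplit]
    simp only [List.map_append, List.map_cons, List.flatMap_append, List.flatMap_cons]
    rw [flatMap_fP v hv1A, flatMap_fP v hv1B]
    have h1 : rmap v v = v := if_neg (lt_irrefl v)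
    have h2 : fP v v = [v] := by
      unfold fP; rw [if_neg (by omega), h1]
    have h3 : fP v (v+1) = [] := if_pos rfl
    rw [h1, h2, h3]
    simp
  have hlift : (π.flatMap (fP v)).flatMap (fL v) = π := by
    rw [← hπ₂, h_erase]
    have h1 : rmap v v = v := if_neg (lt_irrefl v)
    simp only [List.map_append, List.map_cons, List.flatMap_append, List.flatMap_cons, h1]
    rw [flatMap_fL_map v hvA hv1A, flatMap_fL_map v hvB hv1B]
    have h2 : fL v v = [v, v+1] := if_pos rfl
    rw [h2, hsplit]
    simp
  -- range computations
  have hrangeP : (List.range n).flatMap (fP v) = List.range (n-1) := by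
    rw [hk, range_fP]
    congr 1
    omega
  have hrangeL : (List.range (n-1)).flatMap (fL v) = List.range n := by
    have h1 : n - 1 = v + 1 + k := by omega
    rw [h1, range_fL, hk]
  rw [hπ₂]
  -- final sInf argument
  set S : Set ℕ := {d | reachableIn d π (List.range n)} with hS
  set T : Set ℕ := {d | reachableIn d (π.flatMap (fP v)) (List.range (n-1))} with hT
  have hTS : T ⊆ S := by
    intro d hd
    have := reachable_lift (fL v) (fL_ne_nil v) d _ _ hd
    rw [hlift, hrangeL] at this
    exact this
  have hproj : ∀ d ∈ S, ∃ d' ∈ T, d' ≤ d := by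
    intro d hd
    obtain ⟨d', hle, hR⟩ := reachable_proj (fP v) d π (List.range n) hd
    rw [hrangeP] at hR
    exact ⟨d', hR, hle⟩
  rcases Set.eq_empty_or_nonempty S with hSe | hSne
  · have hTe : T = ∅ := by
      rcases Set.eq_empty_or_nonempty T with h | ⟨d, hd⟩
      · exact h
      · exact absurd (hTS hd) (by rw [hSe]; exact Set.notMem_empty d)
    rw [hSe, hTe]
  · obtain ⟨d', hd'T, hd'le⟩ := hproj _ (Nat.sInf_mem hSne)
    have h1 : sInf T ≤ sInf S := le_trans (Nat.sInf_le hd'T) hd'le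
    have h2 : sInf S ≤ sInf T := Nat.sInf_le (hTS (Nat.sInf_mem ⟨d', hd'T⟩))
    omega
end
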